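/- For n ≥ 3, the group Iso(n) of isometries of the metric space (Sym(n), d_H) has order 2·(n!)². -/

import Mathlib

/-- The Hamming distance between two permutations of `Fin n`. -/
def hdist {n : ℕ} (φ ψ : Equiv.Perm (Fin n)) : ℕ :=
  (Finset.univ.filter fun i => φ i ≠ ψ i).card

namespace IsoProof
open Equiv Equiv.Perm Finset

variable {n : ℕ}

lemma hdist_eq_card_support (φ ψ : Equiv.Perm (Fin n)) :
    hdist φ ψ = (ψ⁻¹ * φ).support.card := by
  unfold hdist
  congr 1
  ext i
  simp only [mem_filter, mem_univ, true_and, Equiv.Perm.mem_support, Equiv.Perm.mul_apply]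
  constructor
  · intro h h2
    exact h (by simpa using congrArg ψ h2)
  · intro h h2
    exact h (by simp [h2])

lemma hdist_one_right (φ : Equiv.Perm (Fin n)) : hdist φ 1 = φ.support.card := by
  simp [hdist_eq_card_support]

lemma hdist_mul_left (g φ ψ : Equiv.Perm (Fin n)) :
    hdist (g * φ) (g * ψ) = hdist φ ψ := by
  simp [hdist_eq_card_support, mul_assoc]

lemma hdist_mul_right (h φ ψ : Equiv.Perm (Fin n)) :
    hdist (φ * h) (ψ * h) = hdist φ ψ := by
  rw [hdist_eq_card_support, hdist_eq_card_support]
  have e : (ψ * h)⁻¹ * (φ * h) = h⁻¹ * (ψ⁻¹ * φ) * (h⁻¹)⁻¹ := by group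
  rw [e, Equiv.Perm.support_conj, Finset.card_map]

lemma hdist_inv (φ ψ : Equiv.Perm (Fin n)) : hdist φ⁻¹ ψ⁻¹ = hdist φ ψ := by
  rw [hdist_eq_card_support, hdist_eq_card_support, inv_inv]
  have e : ψ * φ⁻¹ = ψ * (ψ⁻¹ * φ)⁻¹ * ψ⁻¹ := by group
  rw [e]
  have e2 := Equiv.Perm.support_conj (σ := ψ) (τ := (ψ⁻¹ * φ)⁻¹)
  rw [e2, Finset.card_map, Equiv.Perm.support_inv]

lemma hdist_comm (φ ψ : Equiv.Perm (Fin n)) : hdist φ ψ = hdist ψ φ := by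
  rw [hdist_eq_card_support, hdist_eq_card_support, ← Equiv.Perm.support_inv]
  congr 1

/-- the 3-cycle x → y → z → x -/
def c3 (x y z : Fin n) : Equiv.Perm (Fin n) := Equiv.swap x z * Equiv.swap x y

lemma c3_fst {x y z : Fin n} (hxy : x ≠ y) (hyz : y ≠ z) : c3 x y z x = y := by
  simp [c3, Equiv.swap_apply_left, Equiv.swap_apply_of_ne_of_ne hxy.symm hyz]

lemma c3_snd {x y z : Fin n} : c3 x y z y = z := by
  simp [c3, Equiv.swap_apply_right, Equiv.swap_apply_left]

lemma c3_trd {x y z : Fin n} (hxz : x ≠ z) (hyz : y ≠ z) : c3 x y z z = x := by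
  simp [c3, Equiv.swap_apply_of_ne_of_ne hxz.symm hyz.symm, Equiv.swap_apply_right]

lemma c3_other {x y z w : Fin n} (hwx : w ≠ x) (hwy : w ≠ y) (hwz : w ≠ z) :
    c3 x y z w = w := by
  simp [c3, Equiv.swap_apply_of_ne_of_ne hwx hwy, Equiv.swap_apply_of_ne_of_ne hwx hwz]

lemma c3_rot {x y z : Fin n} (hxy : x ≠ y) (hxz : x ≠ z) (hyz : y ≠ z) :
    c3 x y z = c3 y z x := by
  refine Equiv.ext fun i => ?_
  by_cases hix : i = x
  · subst hix; rw [c3_fst hxy hyz, c3_trd hxy.symm hxz.symm]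
  by_cases hiy : i = y
  · subst hiy; rw [c3_snd, c3_fst hyz hxz.symm]
  by_cases hiz : i = z
  · subst hiz; rw [c3_trd hxz hyz, c3_snd]
  · rw [c3_other hix hiy hiz, c3_other hiy hiz hix]

lemma c3_inv {x y z : Fin n} (hxy : x ≠ y) (hxz : x ≠ z) (hyz : y ≠ z) :
    (c3 x y z)⁻¹ = c3 x z y := by
  rw [eq_comm, eq_inv_iff_mul_eq_one]
  refine Equiv.ext fun i => ?_
  simp only [Equiv.Perm.mul_apply, Equiv.Perm.one_apply]
  by_cases hix : i = x
  · subst hix; rw [c3_fst hxy hyz, c3_trd hxy hyz.symm]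
  by_cases hiy : i = y
  · subst hiy; rw [c3_snd, c3_snd]
  by_cases hiz : i = z
  · subst hiz; rw [c3_trd hxz hyz, c3_fst hxz hyz.symm]
  · rw [c3_other hix hiy hiz, c3_other hix hiz hiy]

lemma c3_support {x y z : Fin n} (hxy : x ≠ y) (hxz : x ≠ z) (hyz : y ≠ z) :
    (c3 x y z).support = {x, y, z} := by
  ext i
  simp only [Equiv.Perm.mem_support, Finset.mem_insert, Finset.mem_singleton]
  constructor
  · intro h
    by_contra hc
    push_neg at hc
    exact h (c3_other hc.1 hc.2.1 hc.2.2)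
  · rintro (rfl | rfl | rfl)
    · rw [c3_fst hxy hyz]; exact hxy.symm
    · rw [c3_snd]; exact hyz.symm
    · rw [c3_trd hxz hyz]; exact hxz

lemma c3_support_card {x y z : Fin n} (hxy : x ≠ y) (hxz : x ≠ z) (hyz : y ≠ z) :
    (c3 x y z).support.card = 3 := by
  rw [c3_support hxy hxz hyz,
    Finset.card_insert_of_notMem (by simp [hxy, hxz]),
    Finset.card_insert_of_notMem (by simp [hyz]), Finset.card_singleton]

lemma c3_ne_inv {x y z : Fin n} (hxy : x ≠ y) (hxz : x ≠ z) (hyz : y ≠ z) :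
    c3 x y z ≠ (c3 x y z)⁻¹ := by
  rw [c3_inv hxy hxz hyz]
  intro h
  have h2 : c3 x y z x = c3 x z y x := by rw [h]
  rw [c3_fst hxy hyz, c3_fst hxz hyz.symm] at h2
  exact hyz h2

lemma exists_third (hn : 3 ≤ n) (a b : Fin n) : ∃ c : Fin n, c ≠ a ∧ c ≠ b := by
  by_contra h
  push_neg at h
  have hsub : (Finset.univ : Finset (Fin n)) ⊆ {a, b} := by
    intro x _
    rcases eq_or_ne x a with rfl | hxa
    · simp
    rcases h x hxa with rfl
    simp
  have := Finset.card_le_card hsub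
  simp only [Finset.card_univ, Fintype.card_fin] at this
  have h2 : ({a, b} : Finset (Fin n)).card ≤ 2 :=
    le_trans (Finset.card_insert_le _ _) (by simp)
  omega

lemma filter_univ_eq {p : Fin n → Prop} [DecidablePred p] {s : Finset (Fin n)}
    (h : ∀ i, p i ↔ i ∈ s) : Finset.univ.filter p = s := by
  ext i
  simp [Finset.mem_filter, h i]

lemma hdist_c3_swap {x y z : Fin n} (hxy : x ≠ y) (hxz : x ≠ z) (hyz : y ≠ z) :
    hdist (c3 x y z) (Equiv.swap x y) = 2 := by
  unfold hdist
  rw [filter_univ_eq (s := {y, z}) ?_]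
  · rw [Finset.card_insert_of_notMem (by simp [hyz]), Finset.card_singleton]
  intro i
  simp only [Finset.mem_insert, Finset.mem_singleton]
  constructor
  · intro h
    by_contra hc
    push_neg at hc
    obtain ⟨hiy, hiz⟩ := hc
    by_cases hix : i = x
    · subst hix
      rw [c3_fst hxy hyz, Equiv.swap_apply_left] at h
      exact h rfl
    · rw [c3_other hix hiy hiz, Equiv.swap_apply_of_ne_of_ne hix hiy] at h
      exact h rfl
  · rintro (rfl | rfl)
    · rw [c3_snd, Equiv.swap_apply_right]
      exact hxz.symm
    · rw [c3_trd hxz hyz, Equiv.swap_apply_of_ne_of_ne hxz.symm hyz.symm]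
      exact hxz

lemma hdist_gt_two {φ : Equiv.Perm (Fin n)} {a b : Fin n} (hc : φ.support.card = 3)
    (hab : a ≠ b) (hb : b ∉ φ.support) : 2 < hdist φ (Equiv.swap a b) := by
  have hsub : insert b (φ.support.erase a) ⊆
      Finset.univ.filter (fun i => φ i ≠ Equiv.swap a b i) := by
    intro i hi
    rw [Finset.mem_insert] at hi
    rw [Finset.mem_filter]
    refine ⟨Finset.mem_univ _, ?_⟩
    rcases hi with rfl | hi
    · rw [Equiv.swap_apply_right, Equiv.Perm.notMem_support.mp hb]
      exact hab.symm
    · obtain ⟨hia, hisup⟩ := Finset.mem_erase.mp hi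
      have hib : i ≠ b := fun h => hb (h ▸ hisup)
      rw [Equiv.swap_apply_of_ne_of_ne hia hib]
      exact Equiv.Perm.mem_support.mp hisup
  have h1 : 3 ≤ (insert b (φ.support.erase a)).card := by
    rw [Finset.card_insert_of_notMem (fun h => hb (Finset.mem_of_mem_erase h))]
    by_cases ha : a ∈ φ.support
    · rw [Finset.card_erase_of_mem ha, hc]
    · rw [Finset.erase_eq_of_notMem ha, hc]
      omega
  exact lt_of_lt_of_le (by omega) (le_trans h1 (Finset.card_le_card hsub))

lemma hdist_swap_share {a b c : Fin n} (hab : a ≠ b) (hac : a ≠ c) (hbc : b ≠ c) :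
    hdist (Equiv.swap a b) (Equiv.swap a c) = 3 := by
  unfold hdist
  rw [filter_univ_eq (s := {a, b, c}) ?_]
  · rw [Finset.card_insert_of_notMem (by simp [hab, hac]),
      Finset.card_insert_of_notMem (by simp [hbc]), Finset.card_singleton]
  intro i
  simp only [Finset.mem_insert, Finset.mem_singleton]
  constructor
  · intro h
    by_contra hcon
    push_neg at hcon
    obtain ⟨hia, hib, hic⟩ := hcon
    rw [Equiv.swap_apply_of_ne_of_ne hia hib, Equiv.swap_apply_of_ne_of_ne hia hic] at h
    exact h rfl
  · rintro (rfl | rfl | rfl)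
    · rw [Equiv.swap_apply_left, Equiv.swap_apply_left]; exact hbc
    · rw [Equiv.swap_apply_right, Equiv.swap_apply_of_ne_of_ne hab.symm hbc]
      exact hab
    · rw [Equiv.swap_apply_of_ne_of_ne hac.symm hbc.symm, Equiv.swap_apply_right]
      exact hac.symm

lemma hdist_swap_disjoint {a b c d : Fin n} (hab : a ≠ b) (hcd : c ≠ d)
    (hac : a ≠ c) (had : a ≠ d) (hbc : b ≠ c) (hbd : b ≠ d) :
    hdist (Equiv.swap a b) (Equiv.swap c d) = 4 := by
  unfold hdist
  rw [filter_univ_eq (s := {a, b, c, d}) ?_]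
  · rw [Finset.card_insert_of_notMem (by simp [hab, hac, had]),
      Finset.card_insert_of_notMem (by simp [hbc, hbd]),
      Finset.card_insert_of_notMem (by simp [hcd]), Finset.card_singleton]
  intro i
  simp only [Finset.mem_insert, Finset.mem_singleton]
  constructor
  · intro h
    by_contra hcon
    push_neg at hcon
    obtain ⟨hia, hib, hic, hid⟩ := hcon
    rw [Equiv.swap_apply_of_ne_of_ne hia hib, Equiv.swap_apply_of_ne_of_ne hic hid] at h
    exact h rfl
  · rintro (rfl | rfl | rfl | rfl)
    · rw [Equiv.swap_apply_left, Equiv.swap_apply_of_ne_of_ne hac had]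
      exact hab.symm
    · rw [Equiv.swap_apply_right, Equiv.swap_apply_of_ne_of_ne hbc hbd]
      exact hab
    · rw [Equiv.swap_apply_of_ne_of_ne hac.symm hbc.symm, Equiv.swap_apply_left]
      exact hcd
    · rw [Equiv.swap_apply_of_ne_of_ne had.symm hbd.symm, Equiv.swap_apply_right]
      exact hcd.symm

lemma hdist_c3_c3 {a b c d : Fin n} (hab : a ≠ b) (hac : a ≠ c) (had : a ≠ d)
    (hbc : b ≠ c) (hbd : b ≠ d) (hcd : c ≠ d) :
    hdist (c3 a b c) (c3 a b d) = 3 := by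
  unfold hdist
  rw [filter_univ_eq (s := {b, c, d}) ?_]
  · rw [Finset.card_insert_of_notMem (by simp [hbc, hbd]),
      Finset.card_insert_of_notMem (by simp [hcd]), Finset.card_singleton]
  intro i
  simp only [Finset.mem_insert, Finset.mem_singleton]
  constructor
  · intro h
    by_contra hcon
    push_neg at hcon
    obtain ⟨hib, hic, hid⟩ := hcon
    by_cases hia : i = a
    · subst hia
      rw [c3_fst hab hbc, c3_fst hab hbd] at h
      exact h rfl
    · rw [c3_other hia hib hic, c3_other hia hib hid] at h
      exact h rfl
  · rintro (rfl | rfl | rfl)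
    · rw [c3_snd, c3_snd]; exact hcd
    · rw [c3_trd hac hbc, c3_other hac.symm hbc.symm hcd]
      exact hac
    · rw [c3_other had.symm hbd.symm hcd.symm, c3_trd had hbd]
      exact had.symm

lemma hdist_c3_c3inv {a b c d : Fin n} (hab : a ≠ b) (hac : a ≠ c) (had : a ≠ d)
    (hbc : b ≠ c) (hbd : b ≠ d) (hcd : c ≠ d) :
    hdist (c3 a b c) (c3 a d b) = 4 := by
  unfold hdist
  rw [filter_univ_eq (s := {a, b, c, d}) ?_]
  · rw [Finset.card_insert_of_notMem (by simp [hab, hac, had]),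
      Finset.card_insert_of_notMem (by simp [hbc, hbd]),
      Finset.card_insert_of_notMem (by simp [hcd]), Finset.card_singleton]
  intro i
  simp only [Finset.mem_insert, Finset.mem_singleton]
  constructor
  · intro h
    by_contra hcon
    push_neg at hcon
    obtain ⟨hia, hib, hic, hid⟩ := hcon
    rw [c3_other hia hib hic, c3_other hia hid hib] at h
    exact h rfl
  · rintro (rfl | rfl | rfl | rfl)
    · rw [c3_fst hab hbc, c3_fst had hbd.symm]; exact hbd
    · rw [c3_snd, c3_trd hab hbd.symm]; exact (fun h => hac (h ▸ rfl))
    · rw [c3_trd hac hbc, c3_other hac.symm hcd hbc.symm]; exact hac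
    · rw [c3_other had.symm hbd.symm hcd.symm, c3_snd]; exact hbd.symm

lemma hdist_c3_one {x y z : Fin n} (hxy : x ≠ y) (hxz : x ≠ z) (hyz : y ≠ z) :
    hdist (c3 x y z) 1 = 3 := by
  rw [hdist_one_right, c3_support_card hxy hxz hyz]

lemma hdist_swap_one {a b : Fin n} (hab : a ≠ b) :
    hdist (Equiv.swap a b) 1 = 2 := by
  rw [hdist_one_right, Equiv.Perm.support_swap hab,
    Finset.card_insert_of_notMem (by simp [hab]), Finset.card_singleton]

lemma filter_pair_card {P : Fin n → Prop} [DecidablePred P] {a b : Fin n} (hab : a ≠ b) :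
    (({a, b} : Finset (Fin n)).filter P).card
      = (if P a then 1 else 0) + (if P b then 1 else 0) := by
  by_cases hpa : P a <;> by_cases hpb : P b <;>
    simp [Finset.filter_insert, Finset.filter_singleton, hpa, hpb,
      Finset.card_insert_of_notMem, hab]

lemma filter_triple_card {P : Fin n → Prop} [DecidablePred P] {a b c : Fin n}
    (hab : a ≠ b) (hac : a ≠ c) (hbc : b ≠ c) :
    (({a, b, c} : Finset (Fin n)).filter P).card
      = (if P a then 1 else 0) + ((if P b then 1 else 0) + (if P c then 1 else 0)) := by
  have h2 : (({b, c} : Finset (Fin n)).filter P).card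
      = (if P b then 1 else 0) + (if P c then 1 else 0) := filter_pair_card hbc
  have : ({a, b, c} : Finset (Fin n)) = insert a {b, c} := rfl
  rw [this, Finset.filter_insert]
  have hnm : a ∉ ({b, c} : Finset (Fin n)).filter P := by
    intro hmem
    have := Finset.mem_of_mem_filter a hmem
    simp only [Finset.mem_insert, Finset.mem_singleton] at this
    tauto
  by_cases hpa : P a
  · rw [if_pos hpa, Finset.card_insert_of_notMem hnm, h2, if_pos hpa]
    omega
  · rw [if_neg hpa, h2, if_neg hpa, zero_add]

lemma hdist_diff (χ γ : Equiv.Perm (Fin n)) :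
    hdist χ γ + (γ.support.filter fun i => χ i = γ i).card
      = hdist χ 1 + (γ.support.filter fun i => χ i = i).card := by
  classical
  set S := γ.support
  have hsplit : ∀ (ρ : Equiv.Perm (Fin n)),
      hdist χ ρ = (S.filter fun i => χ i ≠ ρ i).card + (Sᶜ.filter fun i => χ i ≠ ρ i).card := by
    intro ρ
    unfold hdist
    rw [← Finset.union_compl S, Finset.filter_union]
    exact Finset.card_union_of_disjoint
      (Finset.disjoint_filter_filter disjoint_compl_right)
  have h1 : hdist χ γ = (S.filter fun i => χ i ≠ γ i).card
      + (Sᶜ.filter fun i => χ i ≠ i).card := by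
    rw [hsplit γ]
    congr 1
    congr 1
    apply Finset.filter_congr
    intro i hi
    have : γ i = i := by
      have : i ∉ γ.support := by simpa [S] using hi
      exact Equiv.Perm.notMem_support.mp this
    rw [this]
  have h2 : hdist χ 1 = (S.filter fun i => χ i ≠ i).card
      + (Sᶜ.filter fun i => χ i ≠ i).card := by
    have := hsplit 1
    exact this
  have e1 : (S.filter fun i => χ i = γ i).card + (S.filter fun i => ¬ (χ i = γ i)).card
      = S.card := Finset.card_filter_add_card_filter_not _
  have e2 : (S.filter fun i => χ i = i).card + (S.filter fun i => ¬ (χ i = i)).card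
      = S.card := Finset.card_filter_add_card_filter_not _
  have r1 : (S.filter fun i => χ i ≠ γ i) = (S.filter fun i => ¬ (χ i = γ i)) := rfl
  have r2 : (S.filter fun i => χ i ≠ i) = (S.filter fun i => ¬ (χ i = i)) := rfl
  rw [h1, h2, r1, r2]
  omega

lemma star_eq {φ ψ : Equiv.Perm (Fin n)} {a b : Fin n} (hab : a ≠ b)
    (h1 : hdist ψ 1 = hdist φ 1)
    (hsw : hdist ψ (Equiv.swap a b) = hdist φ (Equiv.swap a b)) :
    ((if ψ a = b then 1 else 0) + (if ψ b = a then 1 else 0)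
      + (if φ a = a then 1 else 0) + (if φ b = b then 1 else 0) : ℕ)
    = (if φ a = b then 1 else 0) + (if φ b = a then 1 else 0)
      + (if ψ a = a then 1 else 0) + (if ψ b = b then 1 else 0) := by
  have dφ := hdist_diff φ (Equiv.swap a b)
  have dψ := hdist_diff ψ (Equiv.swap a b)
  rw [Equiv.Perm.support_swap hab] at dφ dψ
  rw [filter_pair_card hab, filter_pair_card hab] at dφ dψ
  rw [Equiv.swap_apply_left, Equiv.swap_apply_right] at dφ dψ
  omega

lemma fix_aux {φ ψ : Equiv.Perm (Fin n)}
    (star : ∀ a b : Fin n, a ≠ b →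
      ((if ψ a = b then 1 else 0) + (if ψ b = a then 1 else 0)
        + (if φ a = a then 1 else 0) + (if φ b = b then 1 else 0) : ℕ)
      = (if φ a = b then 1 else 0) + (if φ b = a then 1 else 0)
        + (if ψ a = a then 1 else 0) + (if ψ b = b then 1 else 0)) :
    ∀ a, φ a = a → ψ a = a := by
  intro a hfa
  by_contra hψ
  have hab : a ≠ ψ a := fun h => hψ h.symm
  have hstar := star a (ψ a) hab
  have e1 : (if ψ a = ψ a then (1:ℕ) else 0) = 1 := if_pos rfl
  have e2 : (if φ a = a then (1:ℕ) else 0) = 1 := if_pos hfa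
  have e3 : (if φ a = ψ a then (1:ℕ) else 0) = 0 := by
    rw [if_neg]; rw [hfa]; exact hab
  have e4 : (if φ (ψ a) = a then (1:ℕ) else 0) = 0 := by
    rw [if_neg]
    intro h
    have : φ (ψ a) = φ a := by rw [h, hfa]
    exact hψ (φ.injective this)
  have e5 : (if ψ a = a then (1:ℕ) else 0) = 0 := if_neg hψ
  rw [e1, e2, e3, e4, e5] at hstar
  split_ifs at hstar <;> omega

lemma pointwise_of_swap_dists {φ ψ : Equiv.Perm (Fin n)}
    (h1 : hdist ψ 1 = hdist φ 1)
    (hsw : ∀ a b : Fin n, a ≠ b → hdist ψ (Equiv.swap a b) = hdist φ (Equiv.swap a b)) :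
    ∀ a, ψ a = φ a ∨ ψ a = φ⁻¹ a := by
  have star : ∀ a b : Fin n, a ≠ b →
      ((if ψ a = b then 1 else 0) + (if ψ b = a then 1 else 0)
        + (if φ a = a then 1 else 0) + (if φ b = b then 1 else 0) : ℕ)
      = (if φ a = b then 1 else 0) + (if φ b = a then 1 else 0)
        + (if ψ a = a then 1 else 0) + (if ψ b = b then 1 else 0) :=
    fun a b hab => star_eq hab h1 (hsw a b hab)
  have star' : ∀ a b : Fin n, a ≠ b →
      ((if φ a = b then 1 else 0) + (if φ b = a then 1 else 0)
        + (if ψ a = a then 1 else 0) + (if ψ b = b then 1 else 0) : ℕ)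
      = (if ψ a = b then 1 else 0) + (if ψ b = a then 1 else 0)
        + (if φ a = a then 1 else 0) + (if φ b = b then 1 else 0) :=
    fun a b hab => (star a b hab).symm
  have fix1 : ∀ a, φ a = a → ψ a = a := fix_aux star
  have fix2 : ∀ a, ψ a = a → φ a = a := fix_aux star'
  intro a
  by_cases hfa : φ a = a
  · left; rw [hfa, fix1 a hfa]
  have hψa : ψ a ≠ a := fun h => hfa (fix2 a h)
  by_cases hb : ψ a = φ a
  · left; exact hb
  right
  have hab : a ≠ ψ a := fun h => hψa h.symm
  have hstar := star a (ψ a) hab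
  have e1 : (if ψ a = ψ a then (1:ℕ) else 0) = 1 := if_pos rfl
  have e2 : (if φ a = a then (1:ℕ) else 0) = 0 := if_neg hfa
  have e3 : (if ψ a = a then (1:ℕ) else 0) = 0 := if_neg hψa
  have e4 : (if φ a = ψ a then (1:ℕ) else 0) = 0 := if_neg (fun h => hb h.symm)
  have e5 : (if ψ (ψ a) = ψ a then (1:ℕ) else 0) = 0 := by
    rw [if_neg]
    intro h
    exact hab (ψ.injective h).symm
  have e6 : (if φ (ψ a) = ψ a then (1:ℕ) else 0) = 0 := by
    rw [if_neg]
    intro h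
    have := fix1 _ h
    exact hab (ψ.injective this).symm
  rw [e1, e2, e3, e4, e5, e6] at hstar
  have hφψ : φ (ψ a) = a := by
    by_cases hc : φ (ψ a) = a
    · exact hc
    · rw [if_neg hc] at hstar
      split_ifs at hstar <;> omega
  have := congrArg (fun t => φ⁻¹ t) hφψ
  simpa using this

lemma eq_c3_aux {x y z : Fin n} (hxy : x ≠ y) (hxz : x ≠ z) (hyz : y ≠ z)
    {ψ : Equiv.Perm (Fin n)}
    (hpt : ∀ a, ψ a = c3 x y z a ∨ ψ a = c3 x z y a)
    (hx : ψ x = y) : ψ = c3 x y z := by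
  have hy : ψ y = z := by
    rcases hpt y with h | h
    · rwa [c3_snd] at h
    · rw [c3_trd hxy hyz.symm] at h
      exfalso
      rcases hpt z with h2 | h2
      · rw [c3_trd hxz hyz] at h2
        exact hyz (ψ.injective (h.trans h2.symm))
      · rw [c3_snd] at h2
        exact hxz (ψ.injective (hx.trans h2.symm))
  have hz : ψ z = x := by
    rcases hpt z with h | h
    · rwa [c3_trd hxz hyz] at h
    · rw [c3_snd] at h
      exact absurd (ψ.injective (hx.trans h.symm)) hxz
  refine Equiv.ext fun i => ?_
  by_cases hix : i = x
  · subst hix; rw [hx, c3_fst hxy hyz]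
  by_cases hiy : i = y
  · subst hiy; rw [hy, c3_snd]
  by_cases hiz : i = z
  · subst hiz; rw [hz, c3_trd hxz hyz]
  · rw [c3_other hix hiy hiz]
    rcases hpt i with h | h
    · rwa [c3_other hix hiy hiz] at h
    · rwa [c3_other hix hiz hiy] at h

lemma eq_c3_or_inv {x y z : Fin n} (hxy : x ≠ y) (hxz : x ≠ z) (hyz : y ≠ z)
    {ψ : Equiv.Perm (Fin n)}
    (hpt : ∀ a, ψ a = c3 x y z a ∨ ψ a = (c3 x y z)⁻¹ a) :
    ψ = c3 x y z ∨ ψ = (c3 x y z)⁻¹ := by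
  rw [c3_inv hxy hxz hyz] at hpt ⊢
  rcases hpt x with hx | hx
  · rw [c3_fst hxy hyz] at hx
    exact Or.inl (eq_c3_aux hxy hxz hyz hpt hx)
  · rw [c3_fst hxz hyz.symm] at hx
    refine Or.inr (eq_c3_aux hxz hxy hyz.symm (fun a => (hpt a).symm) hx)

lemma hdist_eq_zero_iff {φ ψ : Equiv.Perm (Fin n)} : hdist φ ψ = 0 ↔ φ = ψ := by
  unfold hdist
  rw [Finset.card_eq_zero, Finset.filter_eq_empty_iff]
  constructor
  · intro h
    refine Equiv.ext fun i => ?_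
    have := h (Finset.mem_univ i)
    simpa using this
  · intro h i _
    simp [h]

section chain

variable {u : Equiv.Perm (Fin n) → Equiv.Perm (Fin n)}
  (hiso : ∀ φ ψ, hdist (u φ) (u ψ) = hdist φ ψ)

include hiso

lemma step_c3
    (hT : ∀ x y z : Fin n, x ≠ y → x ≠ z → y ≠ z →
      u (c3 x y z) = c3 x y z ∨ u (c3 x y z) = (c3 x y z)⁻¹)
    {a b w0 : Fin n} (hab : a ≠ b) (haw0 : a ≠ w0) (hbw0 : b ≠ w0)
    (hfix : u (c3 a b w0) = c3 a b w0) :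
    ∀ w, w ≠ a → w ≠ b → u (c3 a b w) = c3 a b w := by
  intro w hwa hwb
  by_cases hww0 : w = w0
  · subst hww0; exact hfix
  rcases hT a b w hab hwa.symm hwb.symm with h | h
  · exact h
  exfalso
  have e := hiso (c3 a b w0) (c3 a b w)
  rw [hfix, h, c3_inv hab hwa.symm hwb.symm] at e
  rw [hdist_c3_c3inv hab haw0 hwa.symm hbw0 hwb.symm (fun hh => hww0 hh.symm)] at e
  rw [hdist_c3_c3 hab haw0 hwa.symm hbw0 hwb.symm (fun hh => hww0 hh.symm)] at e
  omega

lemma all_c3_fixed (hn : 3 ≤ n)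
    (hinj : Function.Injective u)
    (hT : ∀ x y z : Fin n, x ≠ y → x ≠ z → y ≠ z →
      u (c3 x y z) = c3 x y z ∨ u (c3 x y z) = (c3 x y z)⁻¹)
    {x y z : Fin n} (hxy : x ≠ y) (hxz : x ≠ z) (hyz : y ≠ z)
    (hfix : u (c3 x y z) = c3 x y z) :
    ∀ a b c : Fin n, a ≠ b → a ≠ c → b ≠ c → u (c3 a b c) = c3 a b c := by
  classical
  set P : Fin n → Fin n → Prop :=
    fun a b => ∀ w, w ≠ a → w ≠ b → u (c3 a b w) = c3 a b w with hP
  have hstep : ∀ a b w0 : Fin n, a ≠ b → a ≠ w0 → b ≠ w0 →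
      u (c3 a b w0) = c3 a b w0 → P a b :=
    fun a b w0 h1 h2 h3 h4 => step_c3 hiso hT h1 h2 h3 h4
  have hP0 : P x y := hstep x y z hxy hxz hyz hfix
  have hrot : ∀ a b : Fin n, a ≠ b → P a b → ∀ w, w ≠ a → w ≠ b → P b w := by
    intro a b hab hPab w hwa hwb
    have hf : u (c3 a b w) = c3 a b w := hPab w hwa hwb
    rw [c3_rot hab hwa.symm hwb.symm] at hf
    exact hstep b w a hwb.symm hab.symm hwa hf
  have hinvr : ∀ a b : Fin n, a ≠ b → P a b → P b a := by
    intro a b hab hPab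
    obtain ⟨w, hwa, hwb⟩ := exists_third hn a b
    have hf : u (c3 a b w) = c3 a b w := hPab w hwa hwb
    have hawb : u (c3 a w b) = c3 a w b := by
      rcases hT a w b hwa.symm hab hwb with h | h
      · exact h
      exfalso
      rw [c3_inv hwa.symm hab hwb] at h
      rw [← hf] at h
      have heq := hinj h
      have h2 : c3 a w b a = c3 a b w a := by rw [heq]
      rw [c3_fst hwa.symm hwb, c3_fst hab hwb.symm] at h2
      exact hwb h2
    have hre : c3 a w b = c3 b a w := by
      rw [c3_rot hwa.symm hab hwb, c3_rot hwb hwa hab.symm]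
    rw [hre] at hawb
    exact hstep b a w hab.symm hwb.symm hwa.symm hawb
  have hyx : P y x := hinvr x y hxy hP0
  have hxw : ∀ w, w ≠ x → w ≠ y → P x w := fun w hwx hwy => hrot y x hxy.symm hyx w hwy hwx
  have hyw : ∀ w, w ≠ x → w ≠ y → P y w := fun w hwx hwy => hrot x y hxy hP0 w hwx hwy
  have hchain : ∀ a b : Fin n, a ≠ b → P a b := by
    intro a b hab
    by_cases hax : a = x
    · subst hax
      by_cases hby : b = y
      · subst hby; exact hP0
      · exact hxw b (Ne.symm hab) hby
    by_cases hay : a = y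
    · subst hay
      by_cases hbx : b = x
      · subst hbx; exact hyx
      · exact hyw b hbx (Ne.symm hab)
    have hxa : P x a := hxw a hax hay
    by_cases hbx : b = x
    · subst hbx
      exact hinvr b a (fun h => hax h.symm) hxa
    · exact hrot x a (fun h => hax h.symm) hxa b hbx (fun h => hab h.symm)
  intro a b c hab hac hbc
  exact hchain a b hab c hac.symm hbc.symm

lemma u_eq_id (hn : 3 ≤ n)
    (h1 : u 1 = 1)
    (hsw : ∀ a b : Fin n, a ≠ b → u (Equiv.swap a b) = Equiv.swap a b)
    (hc3 : ∀ x y z : Fin n, x ≠ y → x ≠ z → y ≠ z → u (c3 x y z) = c3 x y z) :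
    ∀ φ, u φ = φ := by
  intro φ
  set ψ := u φ with hψdef
  have hd1 : hdist ψ 1 = hdist φ 1 := by
    have h' := hiso φ 1
    rw [h1] at h'
    exact h'
  have hdsw : ∀ a b : Fin n, a ≠ b →
      hdist ψ (Equiv.swap a b) = hdist φ (Equiv.swap a b) := by
    intro a b hab
    have h' := hiso φ (Equiv.swap a b)
    rw [hsw a b hab] at h'
    exact h'
  have hpt := pointwise_of_swap_dists hd1 hdsw
  by_contra hne
  have hea : ∃ a, ψ a ≠ φ a := by
    by_contra hc
    push_neg at hc
    exact hne (Equiv.ext hc)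
  obtain ⟨a, hψa⟩ := hea
  have hz : ψ a = φ⁻¹ a := (hpt a).resolve_left hψa
  have hfa : φ a ≠ a := by
    intro h
    have h2 : φ⁻¹ a = a := Equiv.Perm.inv_eq_iff_eq.mpr h.symm
    exact hψa (hz.trans (h2.trans h.symm))
  have hinva : φ⁻¹ a ≠ a := by
    intro h
    exact hfa (Equiv.Perm.inv_eq_iff_eq.mp h).symm
  have hay : a ≠ φ a := fun h => hfa h.symm
  have hzy : φ⁻¹ a ≠ φ a := fun h => hψa (hz.trans h)
  have hφz : φ (φ⁻¹ a) = a := Equiv.apply_symm_apply φ a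
  have hγ := hc3 (φ⁻¹ a) a (φ a) hinva hzy hay
  have hdγ : hdist ψ (c3 (φ⁻¹ a) a (φ a)) = hdist φ (c3 (φ⁻¹ a) a (φ a)) := by
    have h' := hiso φ (c3 (φ⁻¹ a) a (φ a))
    rw [hγ] at h'
    exact h'
  have dφ := hdist_diff φ (c3 (φ⁻¹ a) a (φ a))
  have dψ := hdist_diff ψ (c3 (φ⁻¹ a) a (φ a))
  rw [c3_support hinva hzy hay] at dφ dψ
  rw [filter_triple_card hinva hzy hay, filter_triple_card hinva hzy hay] at dφ dψ
  rw [c3_fst hinva hay, c3_snd, c3_trd hzy hay] at dφ dψ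
  -- φ indicator values
  rw [if_pos hφz, if_pos rfl, if_neg (fun h : φ (φ⁻¹ a) = φ⁻¹ a => hinva (hφz ▸ h).symm),
    if_neg hfa, if_neg (fun h : φ (φ a) = φ a => hfa (φ.injective h))] at dφ
  -- ψ indicator values
  have hψaa : ψ a ≠ a := fun h => hinva (hz.symm.trans h)
  have hψzz : ψ (φ⁻¹ a) ≠ φ⁻¹ a := by
    rcases hpt (φ⁻¹ a) with h | h
    · rw [h, hφz]; exact hinva.symm
    · rw [h]
      intro hcon
      have h2 : φ⁻¹ a = φ (φ⁻¹ a) := Equiv.Perm.inv_eq_iff_eq.mp hcon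
      rw [hφz] at h2
      exact hinva h2
  have hψyy : ψ (φ a) ≠ φ a := by
    rcases hpt (φ a) with h | h
    · rw [h]; exact fun hcon => hfa (φ.injective hcon)
    · rw [h, Equiv.Perm.coe_inv, Equiv.symm_apply_apply]
      exact hay
  rw [if_neg hψa, if_neg hψzz, if_neg hψaa, if_neg hψyy] at dψ
  have himp : (if ψ (φ a) = φ⁻¹ a then (1:ℕ) else 0)
      ≤ (if φ (φ a) = φ⁻¹ a then 1 else 0) := by
    by_cases h : ψ (φ a) = φ⁻¹ a
    · rcases hpt (φ a) with h2 | h2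
      · rw [if_pos (h2.symm.trans h), if_pos h]
      · exfalso
        rw [h2, Equiv.Perm.coe_inv, Equiv.symm_apply_apply] at h
        exact hinva h.symm
    · rw [if_neg h]; omega
  have hb1 : (if ψ (φ⁻¹ a) = a then (1:ℕ) else 0) ≤ 1 := by split_ifs <;> omega
  set A := (if φ (φ a) = φ⁻¹ a then (1:ℕ) else 0) with hA
  set B := (if ψ (φ⁻¹ a) = a then (1:ℕ) else 0) with hB
  set C := (if ψ (φ a) = φ⁻¹ a then (1:ℕ) else 0) with hC
  omega

end chain

lemma swap_ne_swap {a b c : Fin n} (hab : a ≠ b) (hac : a ≠ c) (hbc : b ≠ c) :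
    Equiv.swap a b ≠ Equiv.swap a c := by
  intro h
  have h2 : Equiv.swap a b b = Equiv.swap a c b := by rw [h]
  rw [Equiv.swap_apply_right, Equiv.swap_apply_of_ne_of_ne hab.symm hbc] at h2
  exact hab h2

lemma swap_support_cases {σ : Equiv.Perm (Fin n)} (h : σ.IsSwap) {p : Fin n}
    (hp : p ∈ σ.support) : ∃ w, w ≠ p ∧ σ = Equiv.swap p w := by
  obtain ⟨x, y, hxy, rfl⟩ := h
  rw [Equiv.Perm.support_swap hxy, Finset.mem_insert, Finset.mem_singleton] at hp
  rcases hp with rfl | rfl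
  · exact ⟨y, fun h => hxy h.symm, rfl⟩
  · exact ⟨x, hxy, Equiv.swap_comm x p⟩

lemma hdist3_common {σ τ : Equiv.Perm (Fin n)} (hσ : σ.IsSwap) (hτ : τ.IsSwap)
    (h3 : hdist σ τ = 3) : (σ.support ∩ τ.support).Nonempty := by
  obtain ⟨x, y, hxy, rfl⟩ := hσ
  obtain ⟨z, w, hzw, rfl⟩ := hτ
  by_contra hempty
  rw [Finset.not_nonempty_iff_eq_empty] at hempty
  have hmem : ∀ e : Fin n, e ∉ (Equiv.swap x y).support ∩ (Equiv.swap z w).support := by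
    intro e he
    rw [hempty] at he
    exact absurd he (Finset.notMem_empty e)
  rw [Equiv.Perm.support_swap hxy, Equiv.Perm.support_swap hzw] at hmem
  have hne : ∀ e f : Fin n, (e = x ∨ e = y) → (e = z ∨ e = w) → False := by
    intro e f he hf
    exact hmem e (by
      rw [Finset.mem_inter]
      constructor <;> simp only [Finset.mem_insert, Finset.mem_singleton] <;> tauto)
  have hxz : x ≠ z := fun h => hne x x (Or.inl rfl) (Or.inl h)
  have hxw : x ≠ w := fun h => hne x x (Or.inl rfl) (Or.inr h)
  have hyz : y ≠ z := fun h => hne y y (Or.inr rfl) (Or.inl h)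
  have hyw : y ≠ w := fun h => hne y y (Or.inr rfl) (Or.inr h)
  rw [hdist_swap_disjoint hxy hzw hxz hxw hyz hyw] at h3
  omega

lemma mem_support_of_hdist_two {ξ : Equiv.Perm (Fin n)} (hcard : ξ.support.card = 3)
    {a b : Fin n} (hab : a ≠ b) (h2 : hdist ξ (Equiv.swap a b) = 2) :
    a ∈ ξ.support ∧ b ∈ ξ.support := by
  constructor
  · by_contra ha
    rw [Equiv.swap_comm] at h2
    have := hdist_gt_two hcard hab.symm ha
    omega
  · by_contra hb
    have := hdist_gt_two hcard hab hb
    omega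

section conj

variable {u : Equiv.Perm (Fin n) → Equiv.Perm (Fin n)}
  (hiso : ∀ φ ψ, hdist (u φ) (u ψ) = hdist φ ψ)
  (hbij : Function.Bijective u)
  (h1 : u 1 = 1)

include hiso hbij h1

lemma supp_card_preserved : ∀ φ, (u φ).support.card = φ.support.card := by
  intro φ
  have h' := hiso φ 1
  rw [h1] at h'
  rw [← hdist_one_right, ← hdist_one_right, h']

lemma image_isSwap : ∀ a b : Fin n, a ≠ b → (u (Equiv.swap a b)).IsSwap := by
  intro a b hab
  have := supp_card_preserved hiso hbij h1 (Equiv.swap a b)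
  rw [Equiv.Perm.support_swap hab] at this
  rw [Finset.card_insert_of_notMem (by simp [hab]), Finset.card_singleton] at this
  exact Equiv.Perm.card_support_eq_two.mp this

lemma exists_star_point (hn : 3 ≤ n) :
    ∀ a : Fin n, ∃ p : Fin n, ∀ x, x ≠ a → p ∈ (u (Equiv.swap a x)).support := by
  intro a
  obtain ⟨b, hba, -⟩ := exists_third hn a a
  obtain ⟨c, hca, hcb⟩ := exists_third hn a b
  have hsw1 := image_isSwap hiso hbij h1 a b (Ne.symm hba)
  have hsw2 := image_isSwap hiso hbij h1 a c (Ne.symm hca)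
  have hd3 : hdist (u (Equiv.swap a b)) (u (Equiv.swap a c)) = 3 := by
    rw [hiso]
    exact hdist_swap_share (Ne.symm hba) (Ne.symm hca) (Ne.symm hcb)
  obtain ⟨p, hp⟩ := hdist3_common hsw1 hsw2 hd3
  rw [Finset.mem_inter] at hp
  obtain ⟨hp1, hp2⟩ := hp
  refine ⟨p, ?_⟩
  intro x hxa
  by_cases hxb : x = b
  · subst hxb; exact hp1
  by_cases hxc : x = c
  · subst hxc; exact hp2
  -- general case
  by_contra hpx
  obtain ⟨q1, hq1p, hT1⟩ := swap_support_cases hsw1 hp1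
  obtain ⟨q2, hq2p, hT2⟩ := swap_support_cases hsw2 hp2
  have hq12 : q1 ≠ q2 := by
    intro h
    subst h
    have : Equiv.swap a b = Equiv.swap a c := hbij.injective (hT1.trans hT2.symm)
    exact (swap_ne_swap (Ne.symm hba) (Ne.symm hca) (Ne.symm hcb)) this
  have hswx := image_isSwap hiso hbij h1 a x (Ne.symm hxa)
  -- ρ := u (swap a x) contains q1 and q2
  have hdx1 : hdist (u (Equiv.swap a x)) (u (Equiv.swap a b)) = 3 := by
    rw [hiso]
    exact hdist_swap_share (Ne.symm hxa) (Ne.symm hba) hxb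
  have hdx2 : hdist (u (Equiv.swap a x)) (u (Equiv.swap a c)) = 3 := by
    rw [hiso]
    exact hdist_swap_share (Ne.symm hxa) (Ne.symm hca) hxc
  obtain ⟨m1, hm1⟩ := hdist3_common hswx hsw1 hdx1
  rw [Finset.mem_inter] at hm1
  have hq1mem : q1 ∈ (u (Equiv.swap a x)).support := by
    have hmm := hm1.2
    rw [hT1, Equiv.Perm.support_swap (Ne.symm hq1p), Finset.mem_insert,
      Finset.mem_singleton] at hmm
    rcases hmm with rfl | rfl
    · exact absurd hm1.1 hpx
    · exact hm1.1
  obtain ⟨m2, hm2⟩ := hdist3_common hswx hsw2 hdx2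
  rw [Finset.mem_inter] at hm2
  have hq2mem : q2 ∈ (u (Equiv.swap a x)).support := by
    have hmm := hm2.2
    rw [hT2, Equiv.Perm.support_swap (Ne.symm hq2p), Finset.mem_insert,
      Finset.mem_singleton] at hmm
    rcases hmm with rfl | rfl
    · exact absurd hm2.1 hpx
    · exact hm2.1
  obtain ⟨w, hwq1, hrepw⟩ := swap_support_cases hswx hq1mem
  have hq2w : q2 = w := by
    have hmm := hq2mem
    rw [hrepw, Equiv.Perm.support_swap (Ne.symm hwq1), Finset.mem_insert,
      Finset.mem_singleton] at hmm
    rcases hmm with rfl | rfl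
    · exact absurd rfl hq12.symm
    · rfl
  have hrep : u (Equiv.swap a x) = Equiv.swap q1 q2 := by
    rw [hrepw, hq2w]
  -- now u (swap a x) = swap q1 q2, with triangle {p, q1, q2}
  -- pull back the 3-cycle c3 p q1 q2
  obtain ⟨ξ, hξ⟩ := hbij.surjective (c3 p q1 q2)
  have hξcard : ξ.support.card = 3 := by
    have := supp_card_preserved hiso hbij h1 ξ
    rw [hξ, c3_support_card hq1p.symm hq2p.symm hq12] at this
    omega
  have hmem_ab : a ∈ ξ.support ∧ b ∈ ξ.support := by
    refine mem_support_of_hdist_two hξcard (Ne.symm hba) ?_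
    have h' := hiso ξ (Equiv.swap a b)
    rw [hξ, hT1] at h'
    rw [← h']
    exact hdist_c3_swap hq1p.symm hq2p.symm hq12
  have hmem_c : c ∈ ξ.support := by
    have h2 : hdist ξ (Equiv.swap a c) = 2 := by
      have h' := hiso ξ (Equiv.swap a c)
      rw [hξ, hT2] at h'
      rw [← h']
      have hrot2 : c3 p q1 q2 = c3 q2 p q1 := by
        rw [c3_rot hq1p.symm hq2p.symm hq12, c3_rot hq12 hq1p hq2p.symm.symm]
      rw [hrot2, Equiv.swap_comm p q2]
      exact hdist_c3_swap hq2p hq12.symm hq1p.symm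
    exact (mem_support_of_hdist_two hξcard (Ne.symm hca) h2).2
  have hmem_x : x ∈ ξ.support := by
    have h2 : hdist ξ (Equiv.swap a x) = 2 := by
      have h' := hiso ξ (Equiv.swap a x)
      rw [hξ, hrep] at h'
      rw [← h']
      have hrot1 : c3 p q1 q2 = c3 q1 q2 p := c3_rot hq1p.symm hq2p.symm hq12
      rw [hrot1]
      exact hdist_c3_swap hq12 hq1p.symm.symm hq2p.symm.symm
    exact (mem_support_of_hdist_two hξcard (Ne.symm hxa) h2).2
  have hsub : ({a, b, c, x} : Finset (Fin n)) ⊆ ξ.support := by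
    intro i hi
    simp only [Finset.mem_insert, Finset.mem_singleton] at hi
    rcases hi with rfl | rfl | rfl | rfl
    · exact hmem_ab.1
    · exact hmem_ab.2
    · exact hmem_c
    · exact hmem_x
  have hcard4 : ({a, b, c, x} : Finset (Fin n)).card = 4 := by
    rw [Finset.card_insert_of_notMem (by simp [Ne.symm hba, Ne.symm hca, Ne.symm hxa]),
      Finset.card_insert_of_notMem (by simp [Ne.symm hcb, Ne.symm hxb]),
      Finset.card_insert_of_notMem (by simp [Ne.symm hxc]), Finset.card_singleton]
  have := Finset.card_le_card hsub
  omega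

lemma exists_conj (hn : 3 ≤ n) :
    ∃ pf : Fin n → Fin n, Function.Injective pf ∧
      ∀ a b : Fin n, a ≠ b → u (Equiv.swap a b) = Equiv.swap (pf a) (pf b) := by
  choose pf hpf using exists_star_point hiso hbij h1 hn
  have hinj : Function.Injective pf := by
    intro a a' hpp
    by_contra hne
    have haa' : a ≠ a' := hne
    obtain ⟨e, hea, hea'⟩ := exists_third hn a a'
    have hsw0 := image_isSwap hiso hbij h1 a a' haa'
    have hsw1 := image_isSwap hiso hbij h1 a e (Ne.symm hea)
    have hsw2 := image_isSwap hiso hbij h1 a' e (Ne.symm hea')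
    have hp0 : pf a ∈ (u (Equiv.swap a a')).support := hpf a a' (Ne.symm haa')
    have hp1 : pf a ∈ (u (Equiv.swap a e)).support := hpf a e hea
    have hp2 : pf a ∈ (u (Equiv.swap a' e)).support := by
      rw [hpp]
      exact hpf a' e hea'
    obtain ⟨w, hw, hT0⟩ := swap_support_cases hsw0 hp0
    obtain ⟨v1, hv1, hT1⟩ := swap_support_cases hsw1 hp1
    obtain ⟨v2, hv2, hT2⟩ := swap_support_cases hsw2 hp2
    -- the image of the triangle 3-cycle
    have hcard : (u (c3 a a' e)).support.card = 3 := by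
      rw [supp_card_preserved hiso hbij h1, c3_support_card haa' (Ne.symm hea) (Ne.symm hea')]
    have hm0 : pf a ∈ (u (c3 a a' e)).support ∧ w ∈ (u (c3 a a' e)).support := by
      refine mem_support_of_hdist_two hcard (Ne.symm hw) ?_
      have h' := hiso (c3 a a' e) (Equiv.swap a a')
      rw [hT0] at h'
      rw [h']
      exact hdist_c3_swap haa' (Ne.symm hea) (Ne.symm hea')
    have hm1 : v1 ∈ (u (c3 a a' e)).support := by
      refine (mem_support_of_hdist_two hcard (Ne.symm hv1) ?_).2
      have h' := hiso (c3 a a' e) (Equiv.swap a e)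
      rw [hT1] at h'
      rw [h']
      have hre : c3 a a' e = c3 e a a' := by
        rw [c3_rot haa' (Ne.symm hea) (Ne.symm hea'), c3_rot (Ne.symm hea') (Ne.symm haa') hea]
      rw [hre, Equiv.swap_comm a e]
      exact hdist_c3_swap hea hea' haa'
    have hm2 : v2 ∈ (u (c3 a a' e)).support := by
      refine (mem_support_of_hdist_two hcard (Ne.symm hv2) ?_).2
      have h' := hiso (c3 a a' e) (Equiv.swap a' e)
      rw [hT2] at h'
      rw [h']
      have hre : c3 a a' e = c3 a' e a := c3_rot haa' (Ne.symm hea) (Ne.symm hea')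
      rw [hre]
      exact hdist_c3_swap (Ne.symm hea') (Ne.symm haa') hea
    -- pigeonhole
    by_cases hwv1 : w = v1
    · subst hwv1
      have heq : Equiv.swap a a' = Equiv.swap a e := hbij.injective (hT0.trans hT1.symm)
      have h2 : Equiv.swap a a' a' = Equiv.swap a e a' := by rw [heq]
      rw [Equiv.swap_apply_right, Equiv.swap_apply_of_ne_of_ne (Ne.symm haa') (Ne.symm hea')] at h2
      exact haa' h2
    by_cases hwv2 : w = v2
    · subst hwv2
      have heq : Equiv.swap a a' = Equiv.swap a' e := hbij.injective (hT0.trans hT2.symm)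
      have h2 : Equiv.swap a a' a = Equiv.swap a' e a := by rw [heq]
      rw [Equiv.swap_apply_left, Equiv.swap_apply_of_ne_of_ne haa' (Ne.symm hea)] at h2
      exact haa' h2.symm
    by_cases hv12 : v1 = v2
    · subst hv12
      have heq : Equiv.swap a e = Equiv.swap a' e := hbij.injective (hT1.trans hT2.symm)
      have h2 : Equiv.swap a e e = Equiv.swap a' e e := by rw [heq]
      rw [Equiv.swap_apply_right, Equiv.swap_apply_right] at h2
      exact haa' h2
    have hsub : ({pf a, w, v1, v2} : Finset (Fin n)) ⊆ (u (c3 a a' e)).support := by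
      intro i hi
      simp only [Finset.mem_insert, Finset.mem_singleton] at hi
      rcases hi with rfl | rfl | rfl | rfl
      · exact hm0.1
      · exact hm0.2
      · exact hm1
      · exact hm2
    have hcard4 : ({pf a, w, v1, v2} : Finset (Fin n)).card = 4 := by
      rw [Finset.card_insert_of_notMem (by simp [Ne.symm hw, Ne.symm hv1, Ne.symm hv2]),
        Finset.card_insert_of_notMem (by simp [hwv1, hwv2]),
        Finset.card_insert_of_notMem (by simp [hv12]), Finset.card_singleton]
    have := Finset.card_le_card hsub
    omega
  refine ⟨pf, hinj, ?_⟩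
  intro a b hab
  have hsw := image_isSwap hiso hbij h1 a b hab
  obtain ⟨w, hw, hT⟩ := swap_support_cases hsw (hpf a b (Ne.symm hab))
  have hbmem : pf b ∈ (u (Equiv.swap a b)).support := by
    have h' := hpf b a hab
    rw [Equiv.swap_comm b a] at h'
    exact h'
  rw [hT, Equiv.Perm.support_swap (Ne.symm hw), Finset.mem_insert,
    Finset.mem_singleton] at hbmem
  rcases hbmem with heq | heq
  · exact absurd (hinj heq) hab.symm
  · rw [hT, heq]

lemma classify (hn : 3 ≤ n) :
    ∃ c : Equiv.Perm (Fin n),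
      (∀ φ, u φ = c * φ * c⁻¹) ∨ (∀ φ, u φ = c * φ⁻¹ * c⁻¹) := by
  obtain ⟨pf, hinjpf, hswap⟩ := exists_conj hiso hbij h1 hn
  have hbijpf := Finite.injective_iff_bijective.mp hinjpf
  refine ⟨Equiv.ofBijective pf hbijpf, ?_⟩
  set ce := Equiv.ofBijective pf hbijpf with hce
  have hceap : ∀ a, ce a = pf a := fun a => rfl
  -- conjugated map
  set u₂ : Equiv.Perm (Fin n) → Equiv.Perm (Fin n) := fun φ => ce⁻¹ * u φ * ce with hu₂
  have hiso₂ : ∀ φ ψ, hdist (u₂ φ) (u₂ ψ) = hdist φ ψ := by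
    intro φ ψ
    rw [hu₂]
    simp only
    rw [hdist_mul_right, hdist_mul_left, hiso]
  have h1₂ : u₂ 1 = 1 := by
    rw [hu₂]
    simp only [h1]
    group
  have hinj₂ : Function.Injective u₂ := by
    intro φ ψ h
    simp only [hu₂] at h
    exact hbij.injective (by
      have := congrArg (fun t => ce * t * ce⁻¹) h
      simpa [mul_assoc] using this)
  have hsw₂ : ∀ a b : Fin n, a ≠ b → u₂ (Equiv.swap a b) = Equiv.swap a b := by
    intro a b hab
    rw [hu₂]
    simp only
    rw [hswap a b hab, ← hceap a, ← hceap b, Equiv.swap_apply_apply]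
    group
  have hT : ∀ x y z : Fin n, x ≠ y → x ≠ z → y ≠ z →
      u₂ (c3 x y z) = c3 x y z ∨ u₂ (c3 x y z) = (c3 x y z)⁻¹ := by
    intro x y z hxy hxz hyz
    have hd1 : hdist (u₂ (c3 x y z)) 1 = hdist (c3 x y z) 1 := by
      have h' := hiso₂ (c3 x y z) 1
      rw [h1₂] at h'
      exact h'
    have hdsw : ∀ a b : Fin n, a ≠ b →
        hdist (u₂ (c3 x y z)) (Equiv.swap a b) = hdist (c3 x y z) (Equiv.swap a b) := by
      intro a b hab
      have h' := hiso₂ (c3 x y z) (Equiv.swap a b)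
      rw [hsw₂ a b hab] at h'
      exact h'
    exact eq_c3_or_inv hxy hxz hyz (pointwise_of_swap_dists hd1 hdsw)
  -- distinguished points
  have h0 : (0 : ℕ) < n := by omega
  have h1n : (1 : ℕ) < n := by omega
  have h2n : (2 : ℕ) < n := by omega
  set i0 : Fin n := ⟨0, h0⟩
  set i1 : Fin n := ⟨1, h1n⟩
  set i2 : Fin n := ⟨2, h2n⟩
  have h01 : i0 ≠ i1 := by simp [i0, i1, Fin.ext_iff]
  have h02 : i0 ≠ i2 := by simp [i0, i2, Fin.ext_iff]
  have h12 : i1 ≠ i2 := by simp [i1, i2, Fin.ext_iff]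
  rcases hT i0 i1 i2 h01 h02 h12 with hcase | hcase
  · left
    have hallc3 := all_c3_fixed hiso₂ hn hinj₂ hT h01 h02 h12 hcase
    have hid := u_eq_id hiso₂ hn h1₂ hsw₂ hallc3
    intro φ
    have := hid φ
    rw [hu₂] at this
    simp only at this
    have h2 := congrArg (fun t => ce * t * ce⁻¹) this
    rw [← h2]
    group
  · right
    set u₃ : Equiv.Perm (Fin n) → Equiv.Perm (Fin n) := fun φ => (u₂ φ)⁻¹ with hu₃
    have hiso₃ : ∀ φ ψ, hdist (u₃ φ) (u₃ ψ) = hdist φ ψ := by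
      intro φ ψ
      rw [hu₃]
      simp only
      rw [hdist_inv, hiso₂]
    have h1₃ : u₃ 1 = 1 := by rw [hu₃]; simp [h1₂]
    have hinj₃ : Function.Injective u₃ := by
      intro φ ψ h
      simp only [hu₃] at h
      exact hinj₂ (inv_injective h)
    have hsw₃ : ∀ a b : Fin n, a ≠ b → u₃ (Equiv.swap a b) = Equiv.swap a b := by
      intro a b hab
      rw [hu₃]
      simp only
      rw [hsw₂ a b hab, Equiv.swap_inv]
    have hT₃ : ∀ x y z : Fin n, x ≠ y → x ≠ z → y ≠ z →
        u₃ (c3 x y z) = c3 x y z ∨ u₃ (c3 x y z) = (c3 x y z)⁻¹ := by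
      intro x y z hxy hxz hyz
      rcases hT x y z hxy hxz hyz with h | h
      · right; rw [hu₃]; simp only [h]
      · left; rw [hu₃]; simp only [h, inv_inv]
    have hfix₃ : u₃ (c3 i0 i1 i2) = c3 i0 i1 i2 := by
      rw [hu₃]; simp only [hcase, inv_inv]
    have hallc3 := all_c3_fixed hiso₃ hn hinj₃ hT₃ h01 h02 h12 hfix₃
    have hid := u_eq_id hiso₃ hn h1₃ hsw₃ hallc3
    intro φ
    have := hid φ
    rw [hu₃] at this
    simp only [hu₂] at this
    have h2 : ce⁻¹ * u φ * ce = φ⁻¹ := by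
      rw [← inv_inv (ce⁻¹ * u φ * ce), this]
    have h3 := congrArg (fun t => ce * t * ce⁻¹) h2
    rw [← h3]
    group

end conj

lemma center_triv (hn : 3 ≤ n) {c : Equiv.Perm (Fin n)} (hc : ∀ φ, c * φ = φ * c) :
    c = 1 := by
  refine Equiv.ext fun a => ?_
  have key : ∀ x, x ≠ a → c a = a ∨ c a = x := by
    intro x hxa
    have h := congrArg (fun t : Equiv.Perm (Fin n) => t a) (hc (Equiv.swap a x))
    simp only [Equiv.Perm.mul_apply] at h
    rw [Equiv.swap_apply_left] at h
    by_cases h1 : c a = a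
    · exact Or.inl h1
    by_cases h2 : c a = x
    · exact Or.inr h2
    exfalso
    rw [Equiv.swap_apply_of_ne_of_ne h1 h2] at h
    exact hxa (c.injective h)
  obtain ⟨b, hba, -⟩ := exists_third hn a a
  obtain ⟨d, hda, hdb⟩ := exists_third hn a b
  rcases key b hba with h | h
  · exact h
  rcases key d hda with h2 | h2
  · exact h2
  exact absurd (h.symm.trans h2) (Ne.symm hdb)

lemma exists_noncomm (hn : 3 ≤ n) :
    ∃ φ χ : Equiv.Perm (Fin n), φ * χ ≠ χ * φ := by
  have h0 : (0 : ℕ) < n := by omega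
  have h1n : (1 : ℕ) < n := by omega
  have h2n : (2 : ℕ) < n := by omega
  set i0 : Fin n := ⟨0, h0⟩
  set i1 : Fin n := ⟨1, h1n⟩
  set i2 : Fin n := ⟨2, h2n⟩
  have h01 : i0 ≠ i1 := by simp [i0, i1, Fin.ext_iff]
  have h02 : i0 ≠ i2 := by simp [i0, i2, Fin.ext_iff]
  have h12 : i1 ≠ i2 := by simp [i1, i2, Fin.ext_iff]
  refine ⟨Equiv.swap i0 i1, Equiv.swap i0 i2, ?_⟩
  intro h
  have h2 := congrArg (fun t : Equiv.Perm (Fin n) => t i2) h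
  simp only [Equiv.Perm.mul_apply] at h2
  have l1 : (Equiv.swap i0 i1) ((Equiv.swap i0 i2) i2) = i1 := by
    rw [Equiv.swap_apply_right, Equiv.swap_apply_left]
  have l2 : (Equiv.swap i0 i2) ((Equiv.swap i0 i1) i2) = i0 := by
    rw [Equiv.swap_apply_of_ne_of_ne h02.symm h12.symm, Equiv.swap_apply_right]
  rw [l1, l2] at h2
  exact h01 h2.symm

/-- the standard isometries -/
def isoMap (g h : Equiv.Perm (Fin n)) (b : Bool) :
    Equiv.Perm (Fin n) ≃ Equiv.Perm (Fin n) :=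
  ((if b then Equiv.refl _ else Equiv.inv _).trans (Equiv.mulLeft g)).trans
    (Equiv.mulRight h)

lemma isoMap_apply_true (g h : Equiv.Perm (Fin n)) (φ : Equiv.Perm (Fin n)) :
    isoMap g h true φ = g * φ * h := by
  simp [isoMap, Equiv.mulLeft, Equiv.mulRight]

lemma isoMap_apply_false (g h : Equiv.Perm (Fin n)) (φ : Equiv.Perm (Fin n)) :
    isoMap g h false φ = g * φ⁻¹ * h := by
  simp [isoMap, Equiv.mulLeft, Equiv.mulRight, Equiv.inv]

lemma isoMap_isometry (g h : Equiv.Perm (Fin n)) (b : Bool) :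
    ∀ φ ψ, hdist (isoMap g h b φ) (isoMap g h b ψ) = hdist φ ψ := by
  intro φ ψ
  cases b
  · rw [isoMap_apply_false, isoMap_apply_false, hdist_mul_right, hdist_mul_left, hdist_inv]
  · rw [isoMap_apply_true, isoMap_apply_true, hdist_mul_right, hdist_mul_left]

end IsoProof

open IsoProof in
/-- For `n ≥ 3`, the group `Iso(n)` of isometries of `(Sym(n), d_H)` (the
distance-preserving bijections of `Sym(n)`) has order `2 * (n!)^2`. -/
theorem card_isometry_group (n : ℕ) (hn : 3 ≤ n) :
    Nat.card {t : Equiv.Perm (Fin n) ≃ Equiv.Perm (Fin n) //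
      ∀ φ ψ, hdist (t φ) (t ψ) = hdist φ ψ} = 2 * (n.factorial) ^ 2 := by
  classical
  set F : Equiv.Perm (Fin n) × Equiv.Perm (Fin n) × Bool →
      {t : Equiv.Perm (Fin n) ≃ Equiv.Perm (Fin n) //
        ∀ φ ψ, hdist (t φ) (t ψ) = hdist φ ψ} :=
    fun x => ⟨isoMap x.1 x.2.1 x.2.2, isoMap_isometry x.1 x.2.1 x.2.2⟩ with hF
  -- a helper for the mixed injectivity case
  have absurd_mixed : ∀ g h g' h' : Equiv.Perm (Fin n),
      (∀ φ : Equiv.Perm (Fin n), g * φ * h = g' * φ⁻¹ * h') → False := by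
    intro g h g' h' key
    have hI : ∀ φ : Equiv.Perm (Fin n), (g'⁻¹ * g) * φ * (h * h'⁻¹) = φ⁻¹ := by
      intro φ
      have h3 := congrArg (fun t => g'⁻¹ * t * h'⁻¹) (key φ)
      have l : g'⁻¹ * (g * φ * h) * h'⁻¹ = (g'⁻¹ * g) * φ * (h * h'⁻¹) := by group
      have r : g'⁻¹ * (g' * φ⁻¹ * h') * h'⁻¹ = φ⁻¹ := by group
      rw [l, r] at h3
      exact h3
    have hw : h * h'⁻¹ = (g'⁻¹ * g)⁻¹ := by
      have h1' : (g'⁻¹ * g) * (h * h'⁻¹) = 1 := by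
        have h1 := hI 1
        have e : g'⁻¹ * g * 1 * (h * h'⁻¹) = (g'⁻¹ * g) * (h * h'⁻¹) := by group
        rw [e] at h1
        rw [h1, inv_one]
      exact (inv_eq_of_mul_eq_one_right h1').symm
    have hI2 : ∀ φ : Equiv.Perm (Fin n),
        φ⁻¹ = (g'⁻¹ * g) * φ * (g'⁻¹ * g)⁻¹ := by
      intro φ
      rw [← hw]
      exact (hI φ).symm
    have hmulinv : ∀ α β : Equiv.Perm (Fin n), (α * β)⁻¹ = α⁻¹ * β⁻¹ := by
      intro α β
      rw [hI2 (α * β), hI2 α, hI2 β]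
      group
    have hcomm : ∀ α β : Equiv.Perm (Fin n), α * β = β * α := by
      intro α β
      calc α * β = ((α * β)⁻¹)⁻¹ := (inv_inv _).symm
        _ = (α⁻¹ * β⁻¹)⁻¹ := by rw [hmulinv]
        _ = β⁻¹⁻¹ * α⁻¹⁻¹ := mul_inv_rev _ _
        _ = β * α := by rw [inv_inv, inv_inv]
    obtain ⟨φ, χ, hnc⟩ := exists_noncomm (n := n) hn
    exact hnc (hcomm φ χ)
  -- the same-parity injectivity: derive equality of components
  have same_comp : ∀ g h g' h' : Equiv.Perm (Fin n),
      (∀ φ : Equiv.Perm (Fin n), g * φ * h = g' * φ * h') → g = g' ∧ h = h' := by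
    intro g h g' h' key
    have hI : ∀ φ : Equiv.Perm (Fin n), (g'⁻¹ * g) * φ = φ * (h' * h⁻¹) := by
      intro φ
      have h3 := congrArg (fun t => g'⁻¹ * t * h⁻¹) (key φ)
      have l : g'⁻¹ * (g * φ * h) * h⁻¹ = (g'⁻¹ * g) * φ := by group
      have r : g'⁻¹ * (g' * φ * h') * h⁻¹ = φ * (h' * h⁻¹) := by group
      rw [l, r] at h3
      exact h3
    have h1 := hI 1
    simp only [mul_one, one_mul] at h1
    have hcomm : ∀ φ : Equiv.Perm (Fin n), (g'⁻¹ * g) * φ = φ * (g'⁻¹ * g) := by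
      intro φ
      rw [hI φ, ← h1]
    have hc1 : g'⁻¹ * g = 1 := center_triv hn hcomm
    have hg : g = g' := by
      have := congrArg (fun t => g' * t) hc1
      simpa [mul_assoc] using this
    refine ⟨hg, ?_⟩
    have hc2 : h' * h⁻¹ = 1 := by rw [← h1, hc1]
    have := congrArg (fun t => t * h) hc2
    simp only [one_mul] at this
    rw [inv_mul_cancel_right] at this
    exact this.symm
  have hFbij : Function.Bijective F := by
    constructor
    · rintro ⟨g, h, b⟩ ⟨g', h', b'⟩ heq
      have heq2 : isoMap g h b = isoMap g' h' b' := congrArg Subtype.val heq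
      have hvals : ∀ φ, isoMap g h b φ = isoMap g' h' b' φ :=
        fun φ => by rw [heq2]
      cases b <;> cases b'
      · -- both false
        have key : ∀ φ : Equiv.Perm (Fin n), g * φ * h = g' * φ * h' := by
          intro φ
          have := hvals φ⁻¹
          rw [isoMap_apply_false, isoMap_apply_false, inv_inv] at this
          exact this
        obtain ⟨hg, hh⟩ := same_comp g h g' h' key
        simp [hg, hh]
      · -- false, true : mixed
        exfalso
        apply absurd_mixed g' h' g h
        intro φ
        have := hvals φ
        rw [isoMap_apply_false, isoMap_apply_true] at this
        exact this.symm
      · -- true, false : mixed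
        exfalso
        apply absurd_mixed g h g' h'
        intro φ
        have := hvals φ
        rw [isoMap_apply_true, isoMap_apply_false] at this
        exact this
      · -- both true
        have key : ∀ φ : Equiv.Perm (Fin n), g * φ * h = g' * φ * h' := by
          intro φ
          have := hvals φ
          rw [isoMap_apply_true, isoMap_apply_true] at this
          exact this
        obtain ⟨hg, hh⟩ := same_comp g h g' h' key
        simp [hg, hh]
    · rintro ⟨t, ht⟩
      set u : Equiv.Perm (Fin n) → Equiv.Perm (Fin n) := fun φ => (t 1)⁻¹ * t φ with hu
      have hiso : ∀ φ ψ, hdist (u φ) (u ψ) = hdist φ ψ := by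
        intro φ ψ
        rw [hu]
        simp only
        rw [hdist_mul_left]
        exact ht φ ψ
      have hbiju : Function.Bijective u := by
        constructor
        · intro x y hxy
          simp only [hu] at hxy
          exact t.injective (mul_left_cancel hxy)
        · intro y
          refine ⟨t.symm (t 1 * y), ?_⟩
          simp only [hu, Equiv.apply_symm_apply]
          group
      have h1u : u 1 = 1 := by simp [hu]
      obtain ⟨c, hcase⟩ := classify hiso hbiju h1u hn
      rcases hcase with hcase | hcase
      · refine ⟨(t 1 * c, c⁻¹, true), ?_⟩
        apply Subtype.ext
        simp only [hF]
        refine Equiv.ext fun φ => ?_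
        rw [isoMap_apply_true]
        have := hcase φ
        simp only [hu] at this
        have h2 := congrArg (fun s => t 1 * s) this
        rw [← mul_assoc, mul_inv_cancel, one_mul] at h2
        rw [h2]
        group
      · refine ⟨(t 1 * c, c⁻¹, false), ?_⟩
        apply Subtype.ext
        simp only [hF]
        refine Equiv.ext fun φ => ?_
        rw [isoMap_apply_false]
        have := hcase φ
        simp only [hu] at this
        have h2 := congrArg (fun s => t 1 * s) this
        rw [← mul_assoc, mul_inv_cancel, one_mul] at h2
        rw [h2]
        group
  rw [← Nat.card_eq_of_bijective F hFbij]
  rw [Nat.card_prod, Nat.card_prod]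
  rw [Nat.card_eq_fintype_card (α := Equiv.Perm (Fin n)), Fintype.card_perm, Fintype.card_fin]
  rw [Nat.card_eq_fintype_card (α := Bool), Fintype.card_bool]
  ring
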